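/- (Exact Relaxation, Proposition 3.9.) Let f be a multi-form of multidegree 2τ with τ_i ≥ 1 for all i. Suppose y* is an optimal solution of the DNN relaxation: y* is feasible (M(y*) positive semidefinite, M(y*) entrywise nonnegative, Σ_α g_α y*_α = 1), Σ_α f_α y*_α ≤ Σ_α f_α y_α for every feasible y, and rank M(y*) = 1. Then the relaxation is tight, f_dnn = f_min, and an optimal solution of the original problem can be extracted: there exists x* in the nonnegative multi-sphere with f(x*) = f_dnn. -/

import Mathlib

open MvPolynomial Finset

/-- Grouped multi-indices of multidegree `τ`. -/
def Lam {p : ℕ} (n τ : Fin p → ℕ) : Type :=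
  {β : ∀ i : Fin p, Fin (n i) → ℕ // ∀ i, ∑ j, β i j = τ i}

theorem Lam.entry_le {p : ℕ} {n τ : Fin p → ℕ} (β : Lam n τ) (i : Fin p) (j : Fin (n i)) :
    β.1 i j < τ i + 1 := by
  refine Nat.lt_succ_of_le ?_
  have h := Finset.single_le_sum (f := fun j' => β.1 i j') (fun _ _ => Nat.zero_le _)
    (Finset.mem_univ j)
  exact h.trans (le_of_eq (β.2 i))

noncomputable instance {p : ℕ} (n τ : Fin p → ℕ) : Fintype (Lam n τ) :=
  Fintype.ofInjective
    (fun β : Lam n τ =>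
      (fun i j => (⟨β.1 i j, β.entry_le i j⟩ : Fin (τ i + 1)) :
        ∀ i : Fin p, Fin (n i) → Fin (τ i + 1)))
    (by
      intro β γ h
      apply Subtype.ext
      funext i j
      exact congrArg Fin.val (congrFun (congrFun h i) j))

/-- Sum of two grouped multi-indices of the same multidegree `τ`, of multidegree `2τ`. -/
def Lam.add2 {p : ℕ} {n τ : Fin p → ℕ} (β γ : Lam n τ) : Lam n (fun i => 2 * τ i) :=
  ⟨fun i j => β.1 i j + γ.1 i j, fun i => by
    rw [Finset.sum_add_distrib, β.2 i, γ.2 i]; ring⟩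

/-- The value of the monomial `x^β`. -/
noncomputable def Lam.mono {p : ℕ} {n τ : Fin p → ℕ} (β : Lam n τ)
    (x : ∀ i : Fin p, Fin (n i) → ℝ) : ℝ :=
  ∏ i, ∏ j, x i j ^ β.1 i j

/-- The exponent Finsupp corresponding to a grouped multi-index. -/
noncomputable def Lam.toFinsupp {p : ℕ} {n τ : Fin p → ℕ} (β : Lam n τ) :
    (Σ i : Fin p, Fin (n i)) →₀ ℕ :=
  Finsupp.equivFunOnFinite.symm (fun q => β.1 q.1 q.2)

/-- `f` is a multi-form of multidegree `d`. -/
def IsMultiForm {p : ℕ} {n : Fin p → ℕ} (f : MvPolynomial (Σ i : Fin p, Fin (n i)) ℝ)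
    (d : Fin p → ℕ) : Prop :=
  ∀ m ∈ f.support, ∀ i : Fin p, ∑ j, m ⟨i, j⟩ = d i

/-- Evaluation of a polynomial at a grouped point. -/
noncomputable def evalAt {p : ℕ} {n : Fin p → ℕ} (x : ∀ i : Fin p, Fin (n i) → ℝ)
    (f : MvPolynomial (Σ i : Fin p, Fin (n i)) ℝ) : ℝ :=
  MvPolynomial.eval (fun q : Σ i : Fin p, Fin (n i) => x q.1 q.2) f

/-- The nonnegative multi-sphere. -/
def NonnegSphere {p : ℕ} {n : Fin p → ℕ} (x : ∀ i : Fin p, Fin (n i) → ℝ) : Prop :=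
  ∀ i, (∀ j, 0 ≤ x i j) ∧ ∑ j, (x i j) ^ 2 = 1

/-- The multi-form `g(x) = ∏ i (∑ j (x⁽ⁱ⁾ⱼ)²)^{τ i}`. -/
noncomputable def gPoly {p : ℕ} (n τ : Fin p → ℕ) :
    MvPolynomial (Σ i : Fin p, Fin (n i)) ℝ :=
  ∏ i, (∑ j, (X (⟨i, j⟩ : Σ i : Fin p, Fin (n i)) : MvPolynomial (Σ i : Fin p, Fin (n i)) ℝ) ^ 2) ^ τ i

/-- The moment matrix of `y : Λ_{2τ} → ℝ`. -/
def momentMatrix {p : ℕ} {n τ : Fin p → ℕ} (y : Lam n (fun i => 2 * τ i) → ℝ) :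
    Matrix (Lam n τ) (Lam n τ) ℝ :=
  Matrix.of fun β γ => y (β.add2 γ)

/-- Feasibility for the (zero-th order) DNN relaxation: the moment matrix is positive
semidefinite and entrywise nonnegative and `Σ_α g_α y_α = 1`. -/
def DNNFeasible {p : ℕ} {n : Fin p → ℕ} (τ : Fin p → ℕ)
    (y : Lam n (fun i => 2 * τ i) → ℝ) : Prop :=
  (momentMatrix y).PosSemidef ∧ (∀ β γ : Lam n τ, 0 ≤ momentMatrix y β γ) ∧
    (∑ α : Lam n (fun i => 2 * τ i), (gPoly n τ).coeff α.toFinsupp * y α) = 1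

/-- The objective `Σ_α f_α y_α` of the DNN relaxation. -/
noncomputable def DNNObj {p : ℕ} {n : Fin p → ℕ} (τ : Fin p → ℕ)
    (f : MvPolynomial (Σ i : Fin p, Fin (n i)) ℝ)
    (y : Lam n (fun i => 2 * τ i) → ℝ) : ℝ :=
  ∑ α : Lam n (fun i => 2 * τ i), f.coeff α.toFinsupp * y α

section AuxBasic

variable {p : ℕ} {n τ : Fin p → ℕ}

@[simp] lemma Lam.toFinsupp_apply (β : Lam n τ) (q : Σ i : Fin p, Fin (n i)) :
    β.toFinsupp q = β.1 q.1 q.2 := rfl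

lemma Lam.toFinsupp_injective :
    Function.Injective (Lam.toFinsupp (n := n) (τ := τ)) := by
  intro β γ h
  apply Subtype.ext; funext i j
  have := congrArg (fun f => f ⟨i, j⟩) h
  simpa using this

lemma Lam.mono_add2 (β γ : Lam n τ) (x : ∀ i : Fin p, Fin (n i) → ℝ) :
    (β.add2 γ).mono x = β.mono x * γ.mono x := by
  simp [Lam.mono, Lam.add2, pow_add, Finset.prod_mul_distrib]

lemma Lam.mono_nonneg (β : Lam n τ) {x : ∀ i : Fin p, Fin (n i) → ℝ}
    (hx : ∀ i j, 0 ≤ x i j) : 0 ≤ β.mono x :=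
  Finset.prod_nonneg fun i _ => Finset.prod_nonneg fun j _ => pow_nonneg (hx i j) _

lemma exists_le_sum_eq {k : ℕ} (m : Fin k → ℕ) :
    ∀ t : ℕ, t ≤ ∑ j, m j → ∃ a : Fin k → ℕ, (∀ j, a j ≤ m j) ∧ ∑ j, a j = t := by
  intro t
  induction t with
  | zero => exact fun _ => ⟨fun _ => 0, fun j => Nat.zero_le _, by simp⟩
  | succ t ih =>
    intro ht
    obtain ⟨a, hle, hsum⟩ := ih (Nat.le_of_succ_le ht)
    have hlt : ∑ j, a j < ∑ j, m j := by omega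
    have hex : ∃ j, a j < m j := by
      by_contra hc; push_neg at hc
      exact absurd (Finset.sum_le_sum fun j _ => hc j) (not_le.mpr hlt)
    obtain ⟨j, hj⟩ := hex
    refine ⟨fun j' => a j' + if j' = j then 1 else 0, fun j' => ?_, ?_⟩
    · by_cases h : j' = j
      · subst h; simpa using hj
      · simpa [h] using hle j'
    · rw [Finset.sum_add_distrib, hsum]
      simp [Finset.sum_ite_eq']

lemma Lam.exists_add2_eq (α : Lam n (fun i => 2 * τ i)) :
    ∃ β γ : Lam n τ, β.add2 γ = α := by
  have h : ∀ i, ∃ a : Fin (n i) → ℕ, (∀ j, a j ≤ α.1 i j) ∧ ∑ j, a j = τ i := fun i =>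
    exists_le_sum_eq (α.1 i) (τ i) (by rw [α.2 i]; show τ i ≤ 2 * τ i; omega)
  choose a hle hsum using h
  refine ⟨⟨a, hsum⟩, ⟨fun i j => α.1 i j - a i j, fun i => ?_⟩, ?_⟩
  · rw [Finset.sum_tsub_distrib _ (fun j _ => hle i j), hsum i, α.2 i]
    show 2 * τ i - τ i = τ i; omega
  · apply Subtype.ext; funext i j
    have := hle i j
    show a i j + (α.1 i j - a i j) = α.1 i j
    omega

end AuxBasic

section AuxForm

variable {p : ℕ} {n : Fin p → ℕ}

lemma IsMultiForm.congr' {f : MvPolynomial (Σ i : Fin p, Fin (n i)) ℝ} {d d' : Fin p → ℕ}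
    (hf : IsMultiForm f d) (h : ∀ i, d i = d' i) : IsMultiForm f d' :=
  fun m hm i => (h i) ▸ hf m hm i

lemma isMultiForm_one : IsMultiForm (1 : MvPolynomial (Σ i : Fin p, Fin (n i)) ℝ)
    (fun _ => 0) := by
  intro m hm i
  have h := MvPolynomial.mem_support_iff.mp hm
  rw [MvPolynomial.coeff_one] at h
  have : (0 : (Σ i : Fin p, Fin (n i)) →₀ ℕ) = m := by
    by_contra hc; simp [hc] at h
  subst this
  simp

lemma IsMultiForm.mul {f g : MvPolynomial (Σ i : Fin p, Fin (n i)) ℝ} {d e : Fin p → ℕ}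
    (hf : IsMultiForm f d) (hg : IsMultiForm g e) :
    IsMultiForm (f * g) (fun i => d i + e i) := by
  classical
  intro m hm i
  obtain ⟨a, ha, b, hb, rfl⟩ := Finset.mem_add.mp (MvPolynomial.support_mul f g hm)
  simp only [Finsupp.add_apply]
  rw [Finset.sum_add_distrib, hf a ha i, hg b hb i]

lemma IsMultiForm.pow {f : MvPolynomial (Σ i : Fin p, Fin (n i)) ℝ} {d : Fin p → ℕ}
    (hf : IsMultiForm f d) (k : ℕ) :
    IsMultiForm (f ^ k) (fun i => k * d i) := by
  induction k with
  | zero => exact isMultiForm_one.congr' (by simp)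
  | succ k ih =>
    rw [pow_succ]
    exact (ih.mul hf).congr' (fun i => by ring)

lemma IsMultiForm.prod {ι : Type*} [DecidableEq ι] (s : Finset ι)
    (f : ι → MvPolynomial (Σ i : Fin p, Fin (n i)) ℝ) (d : ι → Fin p → ℕ)
    (h : ∀ k ∈ s, IsMultiForm (f k) (d k)) :
    IsMultiForm (∏ k ∈ s, f k) (fun i => ∑ k ∈ s, d k i) := by
  induction s using Finset.cons_induction with
  | empty => simpa using isMultiForm_one
  | cons a s ha ih =>
    rw [Finset.prod_cons]
    exact (((h a (Finset.mem_cons_self a s)).mul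
      (ih (fun k hk => h k (Finset.mem_cons_of_mem hk)))).congr'
      (fun i => by rw [Finset.sum_cons]))

lemma gPoly_isMultiForm (n τ : Fin p → ℕ) : IsMultiForm (gPoly n τ) (fun i => 2 * τ i) := by
  classical
  have hX : ∀ i : Fin p,
      IsMultiForm (∑ j, (MvPolynomial.X (⟨i, j⟩ : Σ i : Fin p, Fin (n i))
          : MvPolynomial (Σ i : Fin p, Fin (n i)) ℝ) ^ 2)
        (fun i' => if i' = i then 2 else 0) := by
    intro i m hm i'
    obtain ⟨j, _, hj⟩ := Finset.mem_biUnion.mp (MvPolynomial.support_sum hm)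
    rw [MvPolynomial.support_X_pow, Finset.mem_singleton] at hj
    subst hj
    by_cases h : i' = i
    · subst h
      have hsingle : ∀ j' : Fin (n i'),
          (Finsupp.single (⟨i', j⟩ : Σ i : Fin p, Fin (n i)) 2) ⟨i', j'⟩
            = if j' = j then 2 else 0 := by
        intro j'
        rw [Finsupp.single_apply]
        congr 1
        simp [Sigma.mk.inj_iff, eq_comm]
      simp [hsingle, Finset.sum_ite_eq']
    · have hsingle : ∀ j' : Fin (n i'),
          (Finsupp.single (⟨i, j⟩ : Σ i : Fin p, Fin (n i)) 2) ⟨i', j'⟩ = 0 := by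
        intro j'
        rw [Finsupp.single_apply, if_neg]
        intro hq
        exact h (congrArg Sigma.fst hq).symm
      simp [hsingle, h]
  have hbig := IsMultiForm.prod Finset.univ _ (fun i i' => τ i * (if i' = i then 2 else 0))
    (fun i _ => (hX i).pow (τ i))
  refine hbig.congr' (fun i' => ?_)
  simp only [mul_ite, mul_zero, Finset.sum_ite_eq, Finset.mem_univ, if_true]
  ring

lemma evalAt_gPoly (n τ : Fin p → ℕ) (x : ∀ i : Fin p, Fin (n i) → ℝ) :
    evalAt x (gPoly n τ) = ∏ i, (∑ j, x i j ^ 2) ^ τ i := by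
  simp [evalAt, gPoly]

lemma sum_coeff_mul_mono (τ : Fin p → ℕ)
    (h : MvPolynomial (Σ i : Fin p, Fin (n i)) ℝ) (hh : IsMultiForm h (fun i => 2 * τ i))
    (x : ∀ i : Fin p, Fin (n i) → ℝ) :
    ∑ α : Lam n (fun i => 2 * τ i), h.coeff α.toFinsupp * α.mono x = evalAt x h := by
  classical
  set F : ((Σ i : Fin p, Fin (n i)) →₀ ℕ) → ℝ :=
    fun m => h.coeff m * ∏ q : Σ i : Fin p, Fin (n i), x q.1 q.2 ^ m q with hF
  have hmono : ∀ α : Lam n (fun i => 2 * τ i),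
      α.mono x = ∏ q : Σ i : Fin p, Fin (n i), x q.1 q.2 ^ α.toFinsupp q := by
    intro α
    rw [Lam.mono, ← Finset.univ_sigma_univ, Finset.prod_sigma]
    rfl
  have h1 : ∑ α : Lam n (fun i => 2 * τ i), h.coeff α.toFinsupp * α.mono x
      = ∑ m ∈ Finset.univ.image (Lam.toFinsupp (n := n) (τ := fun i => 2 * τ i)), F m := by
    rw [Finset.sum_image (fun a _ b _ hab => Lam.toFinsupp_injective hab)]
    exact Finset.sum_congr rfl fun α _ => by rw [hF, hmono α]
  have hsub : h.support ⊆ Finset.univ.image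
      (Lam.toFinsupp (n := n) (τ := fun i => 2 * τ i)) := by
    intro m hm
    refine Finset.mem_image.mpr ⟨⟨fun i j => m ⟨i, j⟩, fun i => hh m hm i⟩, Finset.mem_univ _, ?_⟩
    ext q
    cases q
    rfl
  have h2 : ∑ m ∈ Finset.univ.image (Lam.toFinsupp (n := n) (τ := fun i => 2 * τ i)), F m
      = ∑ m ∈ h.support, F m := by
    refine (Finset.sum_subset hsub ?_).symm
    intro m _ hm
    rw [hF]
    simp [MvPolynomial.notMem_support_iff.mp hm]
  rw [h1, h2, evalAt, MvPolynomial.eval_eq']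

end AuxForm

section AuxMove

variable {p : ℕ} {n τ : Fin p → ℕ}

/-- Move one unit of exponent in group `i` from position `src` to position `dst`. -/
def Lam.move (β : Lam n τ) (i : Fin p) (src dst : Fin (n i)) (h : 1 ≤ β.1 i src) : Lam n τ :=
  ⟨Function.update β.1 i
      (fun j' => β.1 i j' + (if j' = dst then 1 else 0) - (if j' = src then 1 else 0)),
    by
      intro i'
      by_cases hi : i' = i
      · subst hi
        rw [Function.update_self]
        rw [Finset.sum_tsub_distrib _ (fun j' _ => ?_)]
        · rw [Finset.sum_add_distrib, β.2 i']
          simp [Finset.sum_ite_eq']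
        · by_cases h1 : j' = src
          · subst h1
            rw [if_pos rfl]
            exact le_trans h (Nat.le_add_right _ _)
          · simp [h1]
      · rw [Function.update_of_ne hi]; exact β.2 i'⟩

lemma Lam.move_apply (β : Lam n τ) (i : Fin p) (src dst : Fin (n i)) (h : 1 ≤ β.1 i src) :
    (β.move i src dst h).1 i
      = fun j' => β.1 i j' + (if j' = dst then 1 else 0) - (if j' = src then 1 else 0) :=
  Function.update_self _ _ _

lemma Lam.move_apply_of_ne (β : Lam n τ) (i : Fin p) (src dst : Fin (n i)) (h : 1 ≤ β.1 i src)
    {i' : Fin p} (hi : i' ≠ i) : (β.move i src dst h).1 i' = β.1 i' :=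
  Function.update_of_ne hi _ _

lemma Lam.move_apply' (β : Lam n τ) (i : Fin p) (src dst : Fin (n i)) (h : 1 ≤ β.1 i src)
    (j' : Fin (n i)) :
    (β.move i src dst h).1 i j'
      = β.1 i j' + (if j' = dst then 1 else 0) - (if j' = src then 1 else 0) :=
  congrFun (Lam.move_apply β i src dst h) j'

lemma Lam.move_self (β : Lam n τ) (i : Fin p) (src : Fin (n i)) (h : 1 ≤ β.1 i src) :
    β.move i src src h = β := by
  apply Subtype.ext
  funext i' j'
  by_cases hi : i' = i
  · subst hi
    rw [Lam.move_apply']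
    omega
  · rw [Lam.move_apply_of_ne _ _ _ _ _ hi]

/-- The multi-index concentrating all mass of group `i` at `m i`. -/
def Lam.conc (τ : Fin p → ℕ) (m : ∀ i, Fin (n i)) : Lam n τ :=
  ⟨fun i j' => if j' = m i then τ i else 0, fun i => by simp [Finset.sum_ite_eq']⟩

lemma prod_pow_move {k : ℕ} (a : Fin k → ℝ) (b : Fin k → ℕ) (src dst : Fin k)
    (h : 1 ≤ b src) :
    (∏ j, a j ^ (b j + (if j = dst then 1 else 0) - (if j = src then 1 else 0))) * a src =
      (∏ j, a j ^ b j) * a dst := by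
  have key : ∀ c : Fin k, (∏ j, a j ^ (if j = c then 1 else 0)) = a c := by
    intro c
    simp [pow_ite, Finset.prod_ite_eq']
  conv_lhs => rw [← key src]
  conv_rhs => rw [← key dst]
  rw [← Finset.prod_mul_distrib, ← Finset.prod_mul_distrib]
  refine Finset.prod_congr rfl fun j _ => ?_
  rw [← pow_add, ← pow_add]
  congr 1
  by_cases h1 : j = src <;> by_cases h2 : j = dst <;> subst_eqs <;> simp_all <;> omega

lemma main_identity (w : Lam n τ → ℝ) (Y : Lam n (fun i => 2 * τ i) → ℝ)
    (hwY : ∀ β γ : Lam n τ, Y (β.add2 γ) = w β * w γ)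
    (β₀ : Lam n τ) (hb : w β₀ ≠ 0) (m : ∀ i, Fin (n i)) (hm : ∀ i, 1 ≤ β₀.1 i (m i)) :
    ∀ β : Lam n τ, w β * w β₀ ^ (∑ i, τ i) =
      w (Lam.conc τ m) * ∏ i, ∏ j, w (β₀.move i (m i) j (hm i)) ^ β.1 i j := by
  classical
  have hrel : ∀ β₁ γ₁ δ₁ ε₁ : Lam n τ, β₁.add2 γ₁ = δ₁.add2 ε₁ →
      w β₁ * w γ₁ = w δ₁ * w ε₁ := by
    intro β₁ γ₁ δ₁ ε₁ hE
    rw [← hwY, ← hwY, hE]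
  suffices H : ∀ N (β : Lam n τ), (∑ i, (τ i - β.1 i (m i))) = N →
      w β * w β₀ ^ (∑ i, τ i) =
        w (Lam.conc τ m) * ∏ i, ∏ j, w (β₀.move i (m i) j (hm i)) ^ β.1 i j by
    exact fun β => H _ β rfl
  intro N
  induction N using Nat.strong_induction_on with
  | _ N ih =>
    intro β hN
    rcases Nat.eq_zero_or_pos N with h0 | hpos
    · -- base case : β = conc
      subst h0
      have hz : ∀ i, β.1 i (m i) = τ i := by
        intro i
        have h1 := Finset.sum_eq_zero_iff.mp hN i (Finset.mem_univ i)
        have h2 := Lam.entry_le β i (m i)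
        omega
      have hβ : β = Lam.conc τ m := by
        apply Subtype.ext; funext i j'
        by_cases hj : j' = m i
        · subst hj; simp [Lam.conc, hz i]
        · have h2 : β.1 i (m i) + ∑ j'' ∈ Finset.univ.erase (m i), β.1 i j'' = τ i := by
            rw [Finset.add_sum_erase _ _ (Finset.mem_univ (m i))]; exact β.2 i
          have h3 : ∑ j'' ∈ Finset.univ.erase (m i), β.1 i j'' = 0 := by
            rw [hz i] at h2; omega
          have h4 := Finset.sum_eq_zero_iff.mp h3 j'
            (Finset.mem_erase.mpr ⟨hj, Finset.mem_univ j'⟩)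
          simp [Lam.conc, hj, h4]
      subst hβ
      congr 1
      calc w β₀ ^ (∑ i, τ i) = ∏ i, w β₀ ^ τ i := (Finset.prod_pow_eq_pow_sum _ _ _).symm
        _ = ∏ i, ∏ j, w (β₀.move i (m i) j (hm i)) ^ (Lam.conc τ m).1 i j := by
            refine Finset.prod_congr rfl fun i _ => ?_
            have hterm : ∀ j : Fin (n i),
                w (β₀.move i (m i) j (hm i)) ^ (Lam.conc τ m).1 i j
                  = if j = m i then w β₀ ^ τ i else 1 := by
              intro j
              by_cases hj : j = m i
              · subst hj
                rw [Lam.move_self]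
                simp [Lam.conc]
              · simp [Lam.conc, hj]
            rw [Finset.prod_congr rfl fun j _ => hterm j]
            simp [Finset.prod_ite_eq']
    · -- inductive step
      have hex1 : ∃ i, β.1 i (m i) < τ i := by
        by_contra hc; push_neg at hc
        have hz : ∀ i ∈ Finset.univ, τ i - β.1 i (m i) = 0 := fun i _ => by
          have := hc i; omega
        rw [Finset.sum_eq_zero hz] at hN; omega
      obtain ⟨i, hi⟩ := hex1
      have hex2 : ∃ j, j ≠ m i ∧ 1 ≤ β.1 i j := by
        by_contra hc; push_neg at hc
        have h2 : β.1 i (m i) + ∑ j ∈ Finset.univ.erase (m i), β.1 i j = τ i := by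
          rw [Finset.add_sum_erase _ _ (Finset.mem_univ (m i))]; exact β.2 i
        have h3 : ∑ j ∈ Finset.univ.erase (m i), β.1 i j = 0 :=
          Finset.sum_eq_zero fun j hj => by
            have := hc j (Finset.mem_erase.mp hj).1; omega
        omega
      obtain ⟨j, hjm, hj1⟩ := hex2
      set β' := β.move i j (m i) hj1 with hβ'
      have hms : β'.1 i (m i) = β.1 i (m i) + 1 := by
        rw [hβ', Lam.move_apply']
        simp [Ne.symm hjm]
      have hlt : (∑ i', (τ i' - β'.1 i' (m i'))) < N := by
        rw [← hN]
        apply Finset.sum_lt_sum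
        · intro i' _
          by_cases hii : i' = i
          · subst hii; rw [hms]; omega
          · rw [hβ', Lam.move_apply_of_ne _ _ _ _ _ hii]
        · exact ⟨i, Finset.mem_univ i, by rw [hms]; omega⟩
      have IH := ih _ hlt β' rfl
      set sij := β₀.move i (m i) j (hm i) with hsij
      have h1 : w β * w β₀ = w β' * w sij := by
        apply hrel
        apply Subtype.ext; funext i' j'
        show β.1 i' j' + β₀.1 i' j' = β'.1 i' j' + sij.1 i' j'
        by_cases hii : i' = i
        · subst hii
          rw [hβ', hsij, Lam.move_apply', Lam.move_apply']
          have hb1 := hm i'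
          rcases eq_or_ne j' j with rfl | e1
          · rw [if_neg hjm, if_pos rfl]
            omega
          · rcases eq_or_ne j' (m i') with rfl | e2
            · rw [if_neg e1, if_pos rfl]
              omega
            · simp [e1, e2]
        · rw [hβ', hsij, Lam.move_apply_of_ne _ _ _ _ _ hii,
            Lam.move_apply_of_ne _ _ _ _ _ hii]
      have hkey : (∏ j', w (β₀.move i (m i) j' (hm i)) ^ β'.1 i j') * w sij
          = (∏ j', w (β₀.move i (m i) j' (hm i)) ^ β.1 i j') * w β₀ := by
        have hp := prod_pow_move (fun j' => w (β₀.move i (m i) j' (hm i))) (β.1 i) j (m i) hj1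
        simp only [Lam.move_self] at hp
        rw [hsij]
        simp only [hβ', Lam.move_apply']
        exact hp
      have h2 : (∏ i', ∏ j', w (β₀.move i' (m i') j' (hm i')) ^ β'.1 i' j') * w sij
          = (∏ i', ∏ j', w (β₀.move i' (m i') j' (hm i')) ^ β.1 i' j') * w β₀ := by
        rw [← Finset.mul_prod_erase Finset.univ
            (fun i' => ∏ j', w (β₀.move i' (m i') j' (hm i')) ^ β'.1 i' j')
            (Finset.mem_univ i),
          ← Finset.mul_prod_erase Finset.univ
            (fun i' => ∏ j', w (β₀.move i' (m i') j' (hm i')) ^ β.1 i' j')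
            (Finset.mem_univ i)]
        have hrest : ∏ i' ∈ Finset.univ.erase i, ∏ j', w (β₀.move i' (m i') j' (hm i')) ^ β'.1 i' j'
            = ∏ i' ∈ Finset.univ.erase i, ∏ j', w (β₀.move i' (m i') j' (hm i')) ^ β.1 i' j' := by
          refine Finset.prod_congr rfl fun i' hi' => ?_
          rw [hβ', Lam.move_apply_of_ne _ _ _ _ _ (Finset.mem_erase.mp hi').1]
        rw [hrest]
        calc ((∏ j', w (β₀.move i (m i) j' (hm i)) ^ β'.1 i j') *
                ∏ i' ∈ Finset.univ.erase i, ∏ j', w (β₀.move i' (m i') j' (hm i')) ^ β.1 i' j') * w sij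
            = ((∏ j', w (β₀.move i (m i) j' (hm i)) ^ β'.1 i j') * w sij) *
                ∏ i' ∈ Finset.univ.erase i, ∏ j', w (β₀.move i' (m i') j' (hm i')) ^ β.1 i' j' := by
              ring
          _ = ((∏ j', w (β₀.move i (m i) j' (hm i)) ^ β.1 i j') * w β₀) *
                ∏ i' ∈ Finset.univ.erase i, ∏ j', w (β₀.move i' (m i') j' (hm i')) ^ β.1 i' j' := by
              rw [hkey]
          _ = _ := by ring
      have hfin : (w β * w β₀ ^ (∑ i', τ i')) * w β₀
          = (w (Lam.conc τ m) * ∏ i', ∏ j', w (β₀.move i' (m i') j' (hm i')) ^ β.1 i' j') * w β₀ := by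
        calc (w β * w β₀ ^ (∑ i', τ i')) * w β₀
            = (w β * w β₀) * w β₀ ^ (∑ i', τ i') := by ring
          _ = (w β' * w sij) * w β₀ ^ (∑ i', τ i') := by rw [h1]
          _ = (w β' * w β₀ ^ (∑ i', τ i')) * w sij := by ring
          _ = (w (Lam.conc τ m) * ∏ i', ∏ j', w (β₀.move i' (m i') j' (hm i')) ^ β'.1 i' j') * w sij := by
              rw [IH]
          _ = w (Lam.conc τ m) *
                ((∏ i', ∏ j', w (β₀.move i' (m i') j' (hm i')) ^ β'.1 i' j') * w sij) := by ring
          _ = w (Lam.conc τ m) *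
                ((∏ i', ∏ j', w (β₀.move i' (m i') j' (hm i')) ^ β.1 i' j') * w β₀) := by rw [h2]
          _ = _ := by ring
      exact mul_right_cancel₀ hb hfin

end AuxMove

section AuxPoint

variable {p : ℕ} {n : Fin p → ℕ}

lemma point_feasible (τ : Fin p → ℕ) (x : ∀ i : Fin p, Fin (n i) → ℝ)
    (hx : NonnegSphere x) :
    DNNFeasible τ (fun α : Lam n (fun i => 2 * τ i) => α.mono x) := by
  have hx0 : ∀ i j, 0 ≤ x i j := fun i j => (hx i).1 j
  have hmm : ∀ β γ : Lam n τ,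
      momentMatrix (fun α : Lam n (fun i => 2 * τ i) => α.mono x) β γ
        = β.mono x * γ.mono x := fun β γ => Lam.mono_add2 β γ x
  refine ⟨Matrix.posSemidef_iff_dotProduct_mulVec.mpr ⟨?_, ?_⟩, ?_, ?_⟩
  · ext β γ
    rw [Matrix.conjTranspose_apply, hmm, hmm]
    simp [mul_comm]
  · intro z
    have hform : dotProduct (star z)
          ((momentMatrix (fun α : Lam n (fun i => 2 * τ i) => α.mono x)).mulVec z)
        = (∑ β : Lam n τ, β.mono x * z β) ^ 2 := by
      rw [sq, Finset.sum_mul_sum, dotProduct]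
      refine Finset.sum_congr rfl fun β _ => ?_
      rw [Matrix.mulVec, dotProduct, Finset.mul_sum]
      refine Finset.sum_congr rfl fun γ _ => ?_
      rw [hmm]
      simp
      ring
    rw [hform]
    exact sq_nonneg _
  · intro β γ
    rw [hmm]
    exact mul_nonneg (Lam.mono_nonneg β hx0) (Lam.mono_nonneg γ hx0)
  · rw [sum_coeff_mul_mono τ _ (gPoly_isMultiForm n τ) x, evalAt_gPoly]
    exact Finset.prod_eq_one fun i _ => by rw [(hx i).2, one_pow]

end AuxPoint

/-- **Exact Relaxation (Proposition 3.9).** If an optimal solution `y*` of the DNN relaxation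
has a rank-one moment matrix, then the relaxation is tight: there is a point `x*` on the
nonnegative multi-sphere with `f(x*) = f_dnn`, which is a minimizer of `f` over the
nonnegative multi-sphere. -/
theorem dnn_exact_relaxation (p : ℕ) (hp : 1 ≤ p)
    (n : Fin p → ℕ) (hn : ∀ i, 1 ≤ n i) (τ : Fin p → ℕ) (hτ : ∀ i, 1 ≤ τ i)
    (f : MvPolynomial (Σ i : Fin p, Fin (n i)) ℝ)
    (hf : IsMultiForm f (fun i => 2 * τ i))
    (ystar : Lam n (fun i => 2 * τ i) → ℝ)
    (hfeas : DNNFeasible τ ystar)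
    (hopt : ∀ y, DNNFeasible τ y → DNNObj τ f ystar ≤ DNNObj τ f y)
    (hrank : (momentMatrix ystar).rank = 1) :
    ∃ xstar : ∀ i : Fin p, Fin (n i) → ℝ, NonnegSphere xstar ∧
      evalAt xstar f = DNNObj τ f ystar ∧
      ∀ x : ∀ i : Fin p, Fin (n i) → ℝ, NonnegSphere x → evalAt xstar f ≤ evalAt x f := by
  classical
  obtain ⟨hpsd, hnn, hg⟩ := hfeas
  set M : Matrix (Lam n τ) (Lam n τ) ℝ := momentMatrix ystar with hMdef
  -- symmetry of the moment matrix
  have hsym : ∀ β γ : Lam n τ, M γ β = M β γ := by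
    intro β γ
    have h := congrFun (congrFun hpsd.1 β) γ
    rw [Matrix.conjTranspose_apply] at h
    simpa using h
  -- a nonzero entry
  have hM0 : ∃ β γ : Lam n τ, M β γ ≠ 0 := by
    by_contra hc; push_neg at hc
    have hz : M = 0 := by ext β γ; exact hc β γ
    rw [hz, Matrix.rank_zero] at hrank
    exact one_ne_zero hrank.symm
  obtain ⟨β₁, γ₁, hne⟩ := hM0
  -- rank-one structure of the columns
  have hrank' : Module.finrank ℝ (LinearMap.range (Matrix.mulVecLin M)) = 1 := hrank
  obtain ⟨v, hv0, hv⟩ := finrank_eq_one_iff'.mp hrank'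
  have hcol : ∀ γ : Lam n τ, (M.mulVec (Pi.single γ 1)) ∈ LinearMap.range (Matrix.mulVecLin M) :=
    fun γ => ⟨Pi.single γ 1, M.mulVecLin_apply _⟩
  choose c hc using fun γ : Lam n τ => hv ⟨M.mulVec (Pi.single γ 1), hcol γ⟩
  have hstruct : ∀ β γ : Lam n τ, M β γ = c γ * (v : Lam n τ → ℝ) β := by
    intro β γ
    have h := congrFun (congrArg Subtype.val (hc γ)) β
    simp only [SetLike.val_smul, Pi.smul_apply, smul_eq_mul, Matrix.mulVec_single_one,
      Matrix.col_apply, mul_one] at h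
    exact h.symm
  have hminor : ∀ β γ δ ε : Lam n τ, M β γ * M δ ε = M δ γ * M β ε := by
    intro β γ δ ε
    rw [hstruct β γ, hstruct δ ε, hstruct δ γ, hstruct β ε]
    ring
  -- the diagonal entry at β₁ is positive
  have hd : 0 < M β₁ β₁ := by
    have h1 := hminor β₁ γ₁ γ₁ β₁
    have h2 : 0 < M β₁ γ₁ * M γ₁ β₁ := by
      rw [hsym β₁ γ₁]
      exact mul_self_pos.mpr hne
    rcases (hnn β₁ β₁).lt_or_eq with h | h
    · exact h
    · exfalso
      rw [h1, ← h, mul_zero] at h2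
      exact lt_irrefl 0 h2
  -- the rank-one factor w
  set w : Lam n τ → ℝ := fun β => M β β₁ / Real.sqrt (M β₁ β₁) with hwdef
  have hw0 : ∀ β, 0 ≤ w β := fun β => div_nonneg (hnn β β₁) (Real.sqrt_nonneg _)
  have hwb : w β₁ = Real.sqrt (M β₁ β₁) := Real.div_sqrt
  have hwbpos : 0 < w β₁ := by rw [hwb]; exact Real.sqrt_pos.mpr hd
  have hM : ∀ β γ : Lam n τ, M β γ = w β * w γ := by
    intro β γ
    have h1 := hminor β β₁ β₁ γ
    have h2 : M γ β₁ = M β₁ γ := hsym β₁ γ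
    rw [hwdef]
    rw [div_mul_div_comm, Real.mul_self_sqrt hd.le, eq_div_iff hd.ne']
    rw [h2]
    linarith [h1]
  have key : ∀ β γ : Lam n τ, ystar (β.add2 γ) = w β * w γ := fun β γ => hM β γ
  -- reference positions
  have hmex : ∀ i, ∃ j, β₁.1 i j ≠ 0 := by
    intro i
    by_contra hc; push_neg at hc
    have h := β₁.2 i
    rw [Finset.sum_eq_zero (fun j _ => hc j)] at h
    have := hτ i
    omega
  choose m hm0 using hmex
  have hm : ∀ i, 1 ≤ β₁.1 i (m i) := fun i => Nat.one_le_iff_ne_zero.mpr (hm0 i)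
  have MI := main_identity w ystar key β₁ hwbpos.ne' m hm
  -- the candidate point
  set xf : ∀ i : Fin p, Fin (n i) → ℝ := fun i j => w (β₁.move i (m i) j (hm i)) with hxf
  have hx0 : ∀ i j, 0 ≤ xf i j := fun i j => hw0 _
  have hmono : ∀ β : Lam n τ,
      (∏ i, ∏ j, w (β₁.move i (m i) j (hm i)) ^ β.1 i j) = Lam.mono β xf := fun β => rfl
  have hconcpos : 0 < w (Lam.conc τ m) := by
    have h := MI β₁
    have hL : 0 < w β₁ * w β₁ ^ (∑ i, τ i) := mul_pos hwbpos (pow_pos hwbpos _)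
    rw [h] at hL
    by_contra hcn
    push_neg at hcn
    have hz : w (Lam.conc τ m) = 0 := le_antisymm hcn (hw0 _)
    rw [hz, zero_mul] at hL
    exact lt_irrefl 0 hL
  set cc : ℝ := w (Lam.conc τ m) / w β₁ ^ (∑ i, τ i) with hccdef
  have hccpos : 0 < cc := div_pos hconcpos (pow_pos hwbpos _)
  have hwc : ∀ β : Lam n τ, w β = cc * Lam.mono β xf := by
    intro β
    rw [hccdef, div_mul_eq_mul_div, eq_div_iff (pow_pos hwbpos _).ne', ← hmono β]
    linarith [MI β]
  have key2 : ∀ α : Lam n (fun i => 2 * τ i), ystar α = cc ^ 2 * Lam.mono α xf := by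
    intro α
    obtain ⟨β, γ, rfl⟩ := Lam.exists_add2_eq α
    rw [key β γ, hwc β, hwc γ, Lam.mono_add2]
    ring
  -- normalization
  set s : Fin p → ℝ := fun i => ∑ j, xf i j ^ 2 with hsdef
  have hsnn : ∀ i, 0 ≤ s i := fun i => Finset.sum_nonneg fun j _ => sq_nonneg _
  have hg1 : cc ^ 2 * ∏ i, s i ^ τ i = 1 := by
    have h2 : ∑ α : Lam n (fun i => 2 * τ i), (gPoly n τ).coeff α.toFinsupp * ystar α
        = cc ^ 2 * ∑ α : Lam n (fun i => 2 * τ i),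
            (gPoly n τ).coeff α.toFinsupp * Lam.mono α xf := by
      rw [Finset.mul_sum]
      refine Finset.sum_congr rfl fun α _ => ?_
      rw [key2 α]; ring
    have h3 := sum_coeff_mul_mono τ (gPoly n τ) (gPoly_isMultiForm n τ) xf
    have h4 := evalAt_gPoly n τ xf
    rw [← hg, h2, h3, h4]
  have hs : ∀ i, 0 < s i := by
    intro i
    rcases (hsnn i).lt_or_eq with h | h
    · exact h
    · exfalso
      have hz : ∏ i', s i' ^ τ i' = 0 :=
        Finset.prod_eq_zero (Finset.mem_univ i)
          (by rw [← h]; exact zero_pow (Nat.one_le_iff_ne_zero.mp (hτ i)))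
      rw [hz, mul_zero] at hg1
      exact one_ne_zero hg1.symm
  have hPpos : 0 < ∏ i, s i ^ τ i := Finset.prod_pos fun i _ => pow_pos (hs i) _
  -- the extracted point on the nonnegative multi-sphere
  have hsph : NonnegSphere (fun i j => xf i j / Real.sqrt (s i)) := by
    intro i
    constructor
    · intro j
      exact div_nonneg (hx0 i j) (Real.sqrt_nonneg _)
    · have h1 : ∀ j : Fin (n i), (xf i j / Real.sqrt (s i)) ^ 2 = xf i j ^ 2 / s i := by
        intro j
        rw [div_pow, Real.sq_sqrt (hsnn i)]
      rw [Finset.sum_congr rfl fun j _ => h1 j, ← Finset.sum_div]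
      exact div_self (hs i).ne'
  have monoeq : ∀ α : Lam n (fun i => 2 * τ i),
      Lam.mono α (fun i j => xf i j / Real.sqrt (s i)) = ystar α := by
    intro α
    have h5 : Lam.mono α (fun i j => xf i j / Real.sqrt (s i))
        = Lam.mono α xf / ∏ i, s i ^ τ i := by
      rw [Lam.mono, Lam.mono, ← Finset.prod_div_distrib]
      refine Finset.prod_congr rfl fun i _ => ?_
      calc ∏ j, (xf i j / Real.sqrt (s i)) ^ α.1 i j
          = ∏ j, (xf i j ^ α.1 i j / Real.sqrt (s i) ^ α.1 i j) := by
            refine Finset.prod_congr rfl fun j _ => ?_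
            rw [div_pow]
        _ = (∏ j, xf i j ^ α.1 i j) / ∏ j, Real.sqrt (s i) ^ α.1 i j :=
            Finset.prod_div_distrib _ _
        _ = (∏ j, xf i j ^ α.1 i j) / Real.sqrt (s i) ^ (∑ j, α.1 i j) := by
            rw [Finset.prod_pow_eq_pow_sum]
        _ = (∏ j, xf i j ^ α.1 i j) / s i ^ τ i := by
            rw [α.2 i]
            show _ / Real.sqrt (s i) ^ (2 * τ i) = _
            rw [pow_mul, Real.sq_sqrt (hsnn i)]
    rw [h5, key2 α, div_eq_iff hPpos.ne']
    calc Lam.mono α xf = Lam.mono α xf * (cc ^ 2 * ∏ i, s i ^ τ i) := by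
          rw [hg1, mul_one]
      _ = cc ^ 2 * Lam.mono α xf * ∏ i, s i ^ τ i := by ring
  have heval : evalAt (fun i j => xf i j / Real.sqrt (s i)) f = DNNObj τ f ystar := by
    rw [← sum_coeff_mul_mono τ f hf (fun i j => xf i j / Real.sqrt (s i))]
    calc ∑ α : Lam n (fun i => 2 * τ i),
          f.coeff α.toFinsupp * Lam.mono α (fun i j => xf i j / Real.sqrt (s i))
        = ∑ α : Lam n (fun i => 2 * τ i), f.coeff α.toFinsupp * ystar α :=
          Finset.sum_congr rfl fun α _ => by rw [monoeq α]
      _ = DNNObj τ f ystar := rfl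
  refine ⟨fun i j => xf i j / Real.sqrt (s i), hsph, heval, ?_⟩
  intro x' hx'
  calc evalAt (fun i j => xf i j / Real.sqrt (s i)) f
      = DNNObj τ f ystar := heval
    _ ≤ DNNObj τ f (fun α : Lam n (fun i => 2 * τ i) => α.mono x') :=
        hopt _ (point_feasible τ x' hx')
    _ = evalAt x' f := sum_coeff_mul_mono τ f hf x'
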